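/- Let p, q = 1-p be complementary orthogonal projections on h, N ≥ 2, P_k the k-excitation projections on h^⊗N, and m̂ = Σ_{k=0}^N (k/N) P_k. Define m̂^{-1} on the range of q_1 by m̂^{-1} := Σ_{k=1}^N (N/k) P_k (which is well-defined since q_1 P_0 = 0). Then for every bosonic unit vector Ψ ∈ h^⊗N, ⟨Ψ, m̂^{-1} q_1 q_2 Ψ⟩ ≤ (N/(N-1)) ⟨Ψ, m̂ Ψ⟩. -/

import Mathlib

open scoped InnerProductSpace
open Finset

/-- The excitation-number projection `P k` associated with a family of one-body
projections `p i` (with `q i = 1 - p i`) on the `N`-fold tensor product: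
`P k = Σ_{a ∈ {0,1}^N, Σ a = k} Π_i p_i^{1-a_i} q_i^{a_i}`. -/
noncomputable def excitProj {H : Type*} [NormedAddCommGroup H] [InnerProductSpace ℂ H]
    {N : ℕ} (p : Fin N → (H →L[ℂ] H)) (k : ℕ) : H →L[ℂ] H :=
  ∑ a ∈ Finset.univ.filter
      (fun a : Fin N → Bool => (Finset.univ.filter (fun i => a i = true)).card = k),
    (List.ofFn (fun i => if a i then 1 - p i else p i)).prod


lemma card_filter_comp_perm {N : ℕ} (π : Equiv.Perm (Fin N)) (a b : Fin N → Bool)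
    (hb : ∀ i, b i = a (π i)) :
    (Finset.univ.filter (fun i => b i = true)).card
      = (Finset.univ.filter (fun i => a i = true)).card := by
  apply Finset.card_nbij' (i := fun i => π i) (j := fun j => π.symm j) <;>
    simp [Set.MapsTo, Set.LeftInvOn, Set.RightInvOn, hb]

lemma comb_aux {N : ℕ} (i0 i1 : Fin N) (hne : i0 ≠ i1) (c : (Fin N → Bool) → ℝ)
    (hc : ∀ (π : Equiv.Perm (Fin N)) a, c (a ∘ π) = c a) (k : ℕ) :
    ((N * N - N : ℕ) : ℝ) *
        ∑ a ∈ Finset.univ.filter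
            (fun a : Fin N → Bool => (Finset.univ.filter (fun i => a i = true)).card = k),
          (if a i0 = true ∧ a i1 = true then c a else 0)
      = ((k * k - k : ℕ) : ℝ) *
        ∑ a ∈ Finset.univ.filter
            (fun a : Fin N → Bool => (Finset.univ.filter (fun i => a i = true)).card = k),
          c a := by
  classical
  set A := Finset.univ.filter
      (fun a : Fin N → Bool => (Finset.univ.filter (fun i => a i = true)).card = k) with hA
  -- step 1: for i ≠ j the (i,j)-sum equals the (i0,i1)-sum
  have hpair : ∀ i j : Fin N, i ≠ j →
      (∑ a ∈ A, (if a i0 = true ∧ a i1 = true then c a else 0))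
        = ∑ a ∈ A, (if a i = true ∧ a j = true then c a else 0) := by
    intro i j hij
    obtain ⟨π, h0, h1⟩ : ∃ π : Equiv.Perm (Fin N), π i0 = i ∧ π i1 = j := by
      refine ⟨(Equiv.swap i1 ((Equiv.swap i0 i) j)).trans (Equiv.swap i0 i), ?_, ?_⟩
      · have : (Equiv.swap i1 ((Equiv.swap i0 i) j)) i0 = i0 := by
          apply Equiv.swap_apply_of_ne_of_ne hne
          intro h
          have := congrArg (Equiv.swap i0 i) h
          simp at this
          exact hij this
        simp [Equiv.trans_apply, this]
      · simp [Equiv.trans_apply, Equiv.swap_apply_left]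
    refine Finset.sum_equiv (Equiv.arrowCongr π (Equiv.refl Bool)) ?_ ?_
    · intro a
      simp only [hA, Finset.mem_filter, Finset.mem_univ, true_and]
      rw [card_filter_comp_perm π.symm a (fun i => (Equiv.arrowCongr π (Equiv.refl Bool) a) i)
        (fun i => by simp [Equiv.arrowCongr])]
    · intro a _
      have e1 : (Equiv.arrowCongr π (Equiv.refl Bool) a) i = a i0 := by
        simp [Equiv.arrowCongr, ← h0]
      have e2 : (Equiv.arrowCongr π (Equiv.refl Bool) a) j = a i1 := by
        simp [Equiv.arrowCongr, ← h1]
      have e3 : c (Equiv.arrowCongr π (Equiv.refl Bool) a) = c a := by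
        have h4 : (Equiv.arrowCongr π (Equiv.refl Bool) a) = (a ∘ π.symm) := by
          funext i; simp [Equiv.arrowCongr]
        rw [h4]
        conv_rhs => rw [show a = (a ∘ π.symm) ∘ π by funext i; simp]
        rw [hc π (a ∘ π.symm)]
      rw [e1, e2, e3]
  -- step 2: double counting over offDiag
  have key : ∑ x ∈ Finset.univ.offDiag (α := Fin N),
      ∑ a ∈ A, (if a x.1 = true ∧ a x.2 = true then c a else 0)
      = ((N * N - N : ℕ) : ℝ) *
        ∑ a ∈ A, (if a i0 = true ∧ a i1 = true then c a else 0) := by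
    have : ∀ x ∈ Finset.univ.offDiag (α := Fin N),
        ∑ a ∈ A, (if a x.1 = true ∧ a x.2 = true then c a else 0)
          = ∑ a ∈ A, (if a i0 = true ∧ a i1 = true then c a else 0) := by
      intro x hx
      rw [Finset.mem_offDiag] at hx
      exact (hpair x.1 x.2 hx.2.2).symm
    rw [Finset.sum_congr rfl this, Finset.sum_const, Finset.offDiag_card]
    simp [nsmul_eq_mul]
  have key2 : ∑ x ∈ Finset.univ.offDiag (α := Fin N),
      ∑ a ∈ A, (if a x.1 = true ∧ a x.2 = true then c a else 0)
      = ((k * k - k : ℕ) : ℝ) * ∑ a ∈ A, c a := by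
    rw [Finset.sum_comm]
    rw [Finset.mul_sum]
    refine Finset.sum_congr rfl ?_
    intro a ha
    have hmem : (Finset.univ.filter (fun i => a i = true)).card = k := by
      simpa [hA] using ha
    have hset : (Finset.univ.offDiag (α := Fin N)).filter (fun x => a x.1 = true ∧ a x.2 = true)
        = (Finset.univ.filter (fun i => a i = true)).offDiag := by
      ext x
      simp only [Finset.mem_filter, Finset.mem_offDiag, Finset.mem_univ, true_and]
      tauto
    calc ∑ x ∈ Finset.univ.offDiag (α := Fin N),
          (if a x.1 = true ∧ a x.2 = true then c a else 0)
        = ∑ x ∈ (Finset.univ.offDiag (α := Fin N)).filter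
            (fun x => a x.1 = true ∧ a x.2 = true), c a := (Finset.sum_filter _ _).symm
      _ = ((k * k - k : ℕ) : ℝ) * c a := by
          rw [hset, Finset.sum_const, Finset.offDiag_card, hmem, nsmul_eq_mul]
  rw [← key, key2]

lemma aux_ineq {k N : ℕ} (hk : 1 ≤ k) (hkN : k ≤ N) (hN : 2 ≤ N) {Sk S' : ℝ}
    (hS : 0 ≤ Sk) (h : ((N * N - N : ℕ) : ℝ) * S' = ((k * k - k : ℕ) : ℝ) * Sk) :
    ((N : ℝ) / k) * S' ≤ ((N : ℝ) / ((N : ℝ) - 1)) * (((k : ℝ) / N) * Sk) := by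
  have hk0 : (0 : ℝ) < k := by exact_mod_cast hk
  have hN0 : (0 : ℝ) < N := by positivity
  have hN1 : (0 : ℝ) < (N : ℝ) - 1 := by
    have : (2 : ℝ) ≤ N := by exact_mod_cast hN
    linarith
  have hc1 : ((N * N - N : ℕ) : ℝ) = (N : ℝ) * N - N := by
    have : N ≤ N * N := Nat.le_mul_of_pos_left N (by omega)
    push_cast [Nat.cast_sub this]
    ring
  have hc2 : ((k * k - k : ℕ) : ℝ) = (k : ℝ) * k - k := by
    have : k ≤ k * k := Nat.le_mul_of_pos_left k (by omega)
    push_cast [Nat.cast_sub this]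
    ring
  rw [hc1, hc2] at h
  have hNN : (N : ℝ) * N - N = N * ((N : ℝ) - 1) := by ring
  have hS' : S' = (k : ℝ) * ((k : ℝ) - 1) * Sk / ((N : ℝ) * ((N : ℝ) - 1)) := by
    rw [eq_div_iff (by positivity)]
    nlinarith [h]
  rw [hS']
  have l : ((N : ℝ)/k) * ((k : ℝ)*((k : ℝ)-1)*Sk/((N : ℝ)*((N : ℝ)-1)))
      = (((k : ℝ)-1)*Sk)/((N : ℝ)-1) := by
    field_simp
  have r : ((N : ℝ)/((N : ℝ)-1)) * (((k : ℝ)/N)*Sk) = ((k : ℝ)*Sk)/((N : ℝ)-1) := by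
    field_simp
  rw [l, r]
  gcongr
  nlinarith [hS]


set_option maxHeartbeats 1000000 in
lemma main_aux {H : Type*} [NormedAddCommGroup H] [InnerProductSpace ℂ H] [CompleteSpace H]
    {N : ℕ} (hN : 2 ≤ N) (p : Fin N → (H →L[ℂ] H))
    (hidem : ∀ i, IsIdempotentElem (p i)) (hsa : ∀ i, IsSelfAdjoint (p i))
    (hcomm : ∀ i j, Commute (p i) (p j))
    (U : Equiv.Perm (Fin N) → (H →L[ℂ] H))
    (hUunit : ∀ π, U π * star (U π) = 1 ∧ star (U π) * U π = 1)
    (hUp : ∀ π i, U π * p i = p (π i) * U π)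
    (Ψ : H) (hΨ : ‖Ψ‖ = 1) (hsym : ∀ π, U π Ψ = Ψ)
    (i0 i1 : Fin N) (hne : i0 ≠ i1) :
    (inner ℂ Ψ (((∑ k ∈ Finset.Icc 1 N, ((N : ℂ) / k) • excitProj p k) *
          ((1 - p i0) * (1 - p i1))) Ψ) : ℂ).re ≤
      ((N : ℝ) / (N - 1)) *
        (inner ℂ Ψ ((∑ k ∈ Finset.range (N + 1), ((k : ℂ) / N) • excitProj p k) Ψ) : ℂ).re := by
  classical
  set S := StarAlgebra.adjoin ℂ (Set.range p) with hS
  letI : CommRing S := StarAlgebra.adjoinCommRingOfComm ℂ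
    (by rintro a ⟨i, rfl⟩ b ⟨j, rfl⟩; exact hcomm i j)
    (by rintro a ⟨i, rfl⟩ b ⟨j, rfl⟩; rw [(hsa j).star_eq]; exact hcomm i j)
  set P : Fin N → S := fun i => ⟨p i, StarAlgebra.subset_adjoin ℂ _ ⟨i, rfl⟩⟩ with hP
  set F : (Fin N → Bool) → Fin N → S :=
    fun a i => if a i then 1 - P i else P i with hF
  set T : (Fin N → Bool) → S := fun a => ∏ i, F a i with hT
  set A : ℕ → Finset (Fin N → Bool) := fun k => Finset.univ.filter
      (fun a : Fin N → Bool => (Finset.univ.filter (fun i => a i = true)).card = k) with hAdef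
  have hFval_t : ∀ a i, a i = true → F a i = 1 - P i := by
    intro a i h; rw [hF]; dsimp only; rw [h, if_pos rfl]
  have hFval_f : ∀ a i, a i = false → F a i = P i := by
    intro a i h; rw [hF]; dsimp only; rw [h]
    simp only [Bool.false_eq_true, if_false]
  -- coercion of products
  have hcoe_prod : ∀ (G : Fin N → S),
      ((∏ i, G i : S) : H →L[ℂ] H) = (List.ofFn (fun i => ((G i : S) : H →L[ℂ] H))).prod := by
    intro G
    rw [← List.prod_ofFn (f := G),
      show (fun i => ((G i : S) : H →L[ℂ] H)) = S.subtype ∘ G from rfl,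
      ← List.map_ofFn]
    exact map_list_prod S.subtype _
  -- excitProj in terms of T
  have hPk : ∀ k, excitProj p k = ∑ a ∈ A k, ((T a : S) : H →L[ℂ] H) := by
    intro k
    rw [excitProj, hAdef]
    refine Finset.sum_congr rfl fun a _ => ?_
    rw [hT]
    dsimp only
    rw [hcoe_prod]
    have he : (fun i => if a i = true then 1 - p i else p i)
        = (fun i => ((F a i : S) : H →L[ℂ] H)) := by
      funext i
      cases h : a i
      · simp only [Bool.false_eq_true, if_false]
        rw [hFval_f a i h]
      · simp only [if_true]
        rw [hFval_t a i h]
        rfl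
    rw [he]
  -- idempotency
  have hPidem : ∀ i, IsIdempotentElem (P i) := by
    intro i
    refine Subtype.ext ?_
    show ((P i * P i : S) : H →L[ℂ] H) = P i
    push_cast
    exact hidem i
  have hFidem : ∀ a i, F a i * F a i = F a i := by
    intro a i
    cases h : a i
    · rw [hFval_f a i h]; exact hPidem i
    · rw [hFval_t a i h]; exact (hPidem i).one_sub
  have hTidem : ∀ a, T a * T a = T a := by
    intro a
    rw [hT]
    dsimp only
    rw [← Finset.prod_mul_distrib]
    exact Finset.prod_congr rfl fun i _ => hFidem a i
  -- star
  have hTstar : ∀ a, star (T a) = T a := by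
    intro a
    rw [hT]
    dsimp only
    rw [star_prod]
    refine Finset.prod_congr rfl fun i _ => ?_
    have hPs : star (P i) = P i := by
      refine Subtype.ext ?_
      rw [StarMemClass.coe_star]
      exact (hsa i).star_eq
    cases h : a i
    · rw [hFval_f a i h, hPs]
    · rw [hFval_t a i h, star_sub, star_one, hPs]
  -- absorption
  have hQT : ∀ a j, (1 - P j) * T a = if a j = true then T a else 0 := by
    intro a j
    have hprod : T a = F a j * ∏ x ∈ univ.erase j, F a x := by
      rw [hT]; dsimp only
      exact (Finset.mul_prod_erase univ (F a) (mem_univ j)).symm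
    cases h : a j
    · have hz : (1 - P j) * P j = 0 := by
        have h2 := hPidem j
        unfold IsIdempotentElem at h2
        rw [sub_mul, one_mul, h2, sub_self]
      simp only [Bool.false_eq_true, if_false]
      rw [hprod, hFval_f a j h, ← mul_assoc, hz, zero_mul]
    · have h2 : (1 - P j) * (1 - P j) = 1 - P j := (hPidem j).one_sub
      rw [if_pos rfl]
      conv_lhs => rw [hprod, hFval_t a j h, ← mul_assoc, h2, ← hFval_t a j h]
      exact hprod.symm
  have hG : ∀ a, T a * ((1 - P i0) * (1 - P i1))
      = if a i0 = true ∧ a i1 = true then T a else 0 := by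
    intro a
    have e : T a * ((1 - P i0) * (1 - P i1)) = (1 - P i0) * ((1 - P i1) * T a) := by
      rw [mul_comm (T a) _, mul_assoc]
    rw [e, hQT]
    cases h1 : a i1
    · rw [if_neg (by simp), mul_zero, if_neg (by simp)]
    · rw [if_pos rfl, hQT]
      by_cases h0 : a i0 = true
      · rw [if_pos h0, if_pos ⟨h0, rfl⟩]
      · rw [if_neg h0, if_neg (fun hc => h0 hc.1)]
  -- real coefficients
  set c : (Fin N → Bool) → ℝ := fun a => (inner ℂ Ψ (((T a : S) : H →L[ℂ] H) Ψ) : ℂ).re with hc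
  have hc0 : ∀ a, 0 ≤ c a := by
    intro a
    have h1 : ((T a : S) : H →L[ℂ] H) * ((T a : S) : H →L[ℂ] H) = ((T a : S) : H →L[ℂ] H) := by
      rw [← MulMemClass.coe_mul, hTidem]
    have h2 : star ((T a : S) : H →L[ℂ] H) = ((T a : S) : H →L[ℂ] H) := by
      rw [← StarMemClass.coe_star, hTstar]
    have h3 : (inner ℂ Ψ (((T a : S) : H →L[ℂ] H) Ψ) : ℂ)
        = inner ℂ (((T a : S) : H →L[ℂ] H) Ψ) (((T a : S) : H →L[ℂ] H) Ψ) := by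
      conv_lhs => rw [← h1]
      rw [ContinuousLinearMap.mul_apply]
      conv_lhs => rw [← h2]
      rw [ContinuousLinearMap.star_eq_adjoint, ContinuousLinearMap.adjoint_inner_right,
        ← ContinuousLinearMap.star_eq_adjoint, h2]
    rw [hc]
    dsimp only
    rw [h3, ← RCLike.re_to_complex]
    exact inner_self_nonneg
  -- permutation invariance
  have hcperm : ∀ (π : Equiv.Perm (Fin N)) a, c (a ∘ π) = c a := by
    intro π a
    have hstep : ∀ i : Fin N, U π * ((F (a ∘ π) i : S) : H →L[ℂ] H)
        = ((F a (π i) : S) : H →L[ℂ] H) * U π := by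
      intro i
      have hcomp : (a ∘ π) i = a (π i) := rfl
      cases h : a (π i)
      · rw [hFval_f (a ∘ π) i (hcomp.trans h), hFval_f a (π i) h]
        exact hUp π i
      · rw [hFval_t (a ∘ π) i (hcomp.trans h), hFval_t a (π i) h]
        have e0 : (((1 - P i : S)) : H →L[ℂ] H) = 1 - p i := rfl
        have e1 : (((1 - P (π i) : S)) : H →L[ℂ] H) = 1 - p (π i) := rfl
        rw [e0, e1, mul_sub, sub_mul, mul_one, one_mul, hUp π i]
    have key : ∀ s : Finset (Fin N), U π * ((∏ i ∈ s, F (a ∘ π) i : S) : H →L[ℂ] H)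
        = ((∏ i ∈ s, F a (π i) : S) : H →L[ℂ] H) * U π := by
      intro s
      induction s using Finset.induction_on with
      | empty =>
        rw [Finset.prod_empty, Finset.prod_empty, OneMemClass.coe_one, mul_one, one_mul]
      | insert j s' hj ih =>
        rw [Finset.prod_insert hj, Finset.prod_insert hj, MulMemClass.coe_mul,
          MulMemClass.coe_mul, ← mul_assoc, hstep j, mul_assoc, ih, ← mul_assoc]
    have hint : U π * ((T (a ∘ π) : S) : H →L[ℂ] H) = ((T a : S) : H →L[ℂ] H) * U π := by
      have e : T a = ∏ i, F a (π i) := by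
        rw [hT]; dsimp only; exact (Equiv.prod_comp π (F a)).symm
      rw [e]
      exact key univ
    have hval : (inner ℂ Ψ (((T (a ∘ π) : S) : H →L[ℂ] H) Ψ) : ℂ)
        = inner ℂ Ψ (((T a : S) : H →L[ℂ] H) Ψ) := by
      calc (inner ℂ Ψ (((T (a ∘ π) : S) : H →L[ℂ] H) Ψ) : ℂ)
          = inner ℂ Ψ (((star (U π) * (U π * ((T (a ∘ π) : S) : H →L[ℂ] H)))) Ψ) := by
            rw [← mul_assoc, (hUunit π).2, one_mul]
        _ = inner ℂ Ψ ((star (U π) * (((T a : S) : H →L[ℂ] H) * U π)) Ψ) := by rw [hint]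
        _ = inner ℂ Ψ (star (U π) (((T a : S) : H →L[ℂ] H) (U π Ψ))) := by
            rw [ContinuousLinearMap.mul_apply, ContinuousLinearMap.mul_apply]
        _ = inner ℂ (U π Ψ) (((T a : S) : H →L[ℂ] H) (U π Ψ)) := by
            rw [ContinuousLinearMap.star_eq_adjoint, ContinuousLinearMap.adjoint_inner_right]
        _ = inner ℂ Ψ (((T a : S) : H →L[ℂ] H) Ψ) := by rw [hsym π]
    rw [hc]
    dsimp only
    rw [hval]
  -- sum reduction
  have hre : ∀ (r : ℝ) (z : ℂ), ((r : ℂ) * z).re = r * z.re := by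
    intro r z; simp [Complex.mul_re]
  have hq01 : ((1 : H →L[ℂ] H) - p i0) * (1 - p i1)
      = (((1 - P i0) * (1 - P i1) : S) : H →L[ℂ] H) := by
    rw [MulMemClass.coe_mul]
    rfl
  have hop : (∑ k ∈ Finset.Icc 1 N, ((N : ℂ) / k) • excitProj p k) * ((1 - p i0) * (1 - p i1))
      = ∑ k ∈ Finset.Icc 1 N, ((N : ℂ) / k) •
          (∑ a ∈ A k, (if a i0 = true ∧ a i1 = true then ((T a : S) : H →L[ℂ] H) else 0)) := by
    rw [Finset.sum_mul]
    refine Finset.sum_congr rfl fun k _ => ?_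
    rw [smul_mul_assoc, hPk k, Finset.sum_mul]
    congr 1
    refine Finset.sum_congr rfl fun a _ => ?_
    rw [hq01, ← MulMemClass.coe_mul, hG a, apply_ite (fun (x : S) => (x : H →L[ℂ] H)),
      ZeroMemClass.coe_zero]
  have hinner_if : ∀ a, (inner ℂ Ψ
        ((if a i0 = true ∧ a i1 = true then ((T a : S) : H →L[ℂ] H) else 0) Ψ) : ℂ).re
      = (if a i0 = true ∧ a i1 = true then c a else 0) := by
    intro a
    by_cases h : a i0 = true ∧ a i1 = true
    · rw [if_pos h, if_pos h]
    · rw [if_neg h, if_neg h]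
      simp
  have hLHS : (inner ℂ Ψ (((∑ k ∈ Finset.Icc 1 N, ((N : ℂ) / k) • excitProj p k) *
        ((1 - p i0) * (1 - p i1))) Ψ) : ℂ).re
      = ∑ k ∈ Finset.Icc 1 N, ((N : ℝ) / k) *
          ∑ a ∈ A k, (if a i0 = true ∧ a i1 = true then c a else 0) := by
    rw [hop, ContinuousLinearMap.sum_apply, inner_sum, Complex.re_sum]
    refine Finset.sum_congr rfl fun k _ => ?_
    rw [ContinuousLinearMap.smul_apply, inner_smul_right]
    have hz : ((N : ℂ) / (k : ℂ)) = (((N : ℝ) / (k : ℝ) : ℝ) : ℂ) := by push_cast; rfl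
    rw [hz, hre]
    congr 1
    rw [ContinuousLinearMap.sum_apply, inner_sum, Complex.re_sum]
    exact Finset.sum_congr rfl fun a _ => hinner_if a
  have hRHS : (inner ℂ Ψ ((∑ k ∈ Finset.range (N + 1), ((k : ℂ) / N) • excitProj p k) Ψ) : ℂ).re
      = ∑ k ∈ Finset.range (N + 1), ((k : ℝ) / N) * ∑ a ∈ A k, c a := by
    rw [ContinuousLinearMap.sum_apply, inner_sum, Complex.re_sum]
    refine Finset.sum_congr rfl fun k _ => ?_
    rw [ContinuousLinearMap.smul_apply, inner_smul_right]
    have hz : ((k : ℂ) / (N : ℂ)) = (((k : ℝ) / (N : ℝ) : ℝ) : ℂ) := by push_cast; rfl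
    rw [hz, hre]
    congr 1
    rw [hPk k, ContinuousLinearMap.sum_apply, inner_sum, Complex.re_sum]
  rw [hLHS, hRHS]
  -- final combination
  have hSk0 : ∀ k, 0 ≤ ∑ a ∈ A k, c a := fun k => Finset.sum_nonneg fun a _ => hc0 a
  have hN2 : (2 : ℝ) ≤ (N : ℝ) := by exact_mod_cast hN
  calc ∑ k ∈ Finset.Icc 1 N, ((N : ℝ) / k) *
          ∑ a ∈ A k, (if a i0 = true ∧ a i1 = true then c a else 0)
      ≤ ∑ k ∈ Finset.Icc 1 N, ((N : ℝ) / ((N : ℝ) - 1)) *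
          (((k : ℝ) / N) * ∑ a ∈ A k, c a) := by
        refine Finset.sum_le_sum fun k hk => ?_
        rw [Finset.mem_Icc] at hk
        refine aux_ineq hk.1 hk.2 hN (hSk0 k) ?_
        have := comb_aux i0 i1 hne c hcperm k
        rw [hAdef]
        exact this
    _ ≤ ∑ k ∈ Finset.range (N + 1), ((N : ℝ) / ((N : ℝ) - 1)) *
          (((k : ℝ) / N) * ∑ a ∈ A k, c a) := by
        refine Finset.sum_le_sum_of_subset_of_nonneg ?_ ?_
        · intro x hx
          rw [Finset.mem_Icc] at hx
          rw [Finset.mem_range]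
          omega
        · intro k _ _
          have h1 : (0 : ℝ) ≤ (N : ℝ) / ((N : ℝ) - 1) := by
            apply div_nonneg <;> linarith
          have h2 : (0 : ℝ) ≤ (k : ℝ) / N := by positivity
          exact mul_nonneg h1 (mul_nonneg h2 (hSk0 k))
    _ = ((N : ℝ) / ((N : ℝ) - 1)) *
          ∑ k ∈ Finset.range (N + 1), ((k : ℝ) / N) * ∑ a ∈ A k, c a := by
        rw [Finset.mul_sum]

theorem stmt_5 {H : Type*} [NormedAddCommGroup H] [InnerProductSpace ℂ H] [CompleteSpace H]
    {N : ℕ} (hN : 2 ≤ N) (p : Fin N → (H →L[ℂ] H))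
    (hidem : ∀ i, IsIdempotentElem (p i)) (hsa : ∀ i, IsSelfAdjoint (p i))
    (hcomm : ∀ i j, Commute (p i) (p j))
    -- the permutation symmetry structure of the tensor product
    (U : Equiv.Perm (Fin N) → (H →L[ℂ] H))
    (hUunit : ∀ π, U π * star (U π) = 1 ∧ star (U π) * U π = 1)
    (hUp : ∀ π i, U π * p i = p (π i) * U π)
    -- the bosonic (permutation-symmetric) unit vector
    (Ψ : H) (hΨ : ‖Ψ‖ = 1) (hsym : ∀ π, U π Ψ = Ψ) :
    (inner ℂ Ψ (((∑ k ∈ Finset.Icc 1 N, ((N : ℂ) / k) • excitProj p k) *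
          ((1 - p ⟨0, by omega⟩) * (1 - p ⟨1, by omega⟩))) Ψ) : ℂ).re ≤
      ((N : ℝ) / (N - 1)) *
        (inner ℂ Ψ ((∑ k ∈ Finset.range (N + 1), ((k : ℂ) / N) • excitProj p k) Ψ) : ℂ).re := by
  exact main_aux hN p hidem hsa hcomm U hUunit hUp Ψ hΨ hsym ⟨0, by omega⟩ ⟨1, by omega⟩
    (by intro h; exact absurd (congrArg Fin.val h) (by norm_num))
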